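/- Let Q : ℝ^d → [0,∞) be measurable and let p ≥ 1, n ≥ 1 be integers. Then ∫_{(ℝ^d)^n} [∑_{σ ∈ Σ_n} ∏_{k=1}^n Q(∑_{j=1}^k λ_{σ(j)})]^p dλ₁ ⋯ dλ_n ≤ (n!)^p (∫_{ℝ^d} Q^p(λ) dλ)^n, where Σ_n is the symmetric group on {1,...,n}. -/
import Mathlib

open MeasureTheory Real
open scoped ENNReal

private lemma sum_Iic_cons {E : Type*} [AddCommMonoid E] {n : ℕ} (x : E) (y : Fin n → E)
    (k : Fin n) :
    ∑ j ∈ Finset.Iic k.succ, Fin.cons x y j = x + ∑ j ∈ Finset.Iic k, y j := by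
  have h : ∀ (m : ℕ) (k : Fin m) (f : Fin m → E),
      ∑ j ∈ Finset.Iic k, f j = ∑ j : Fin m, if j ≤ k then f j else 0 := by
    intro m k f
    rw [← Finset.sum_filter]
    congr 1
    ext j
    simp
  rw [h, h, Fin.sum_univ_succ]
  simp [Fin.succ_le_succ_iff]

private lemma Iic_zero_fin (n : ℕ) : Finset.Iic (0 : Fin (n + 1)) = {0} := by
  ext j; simp [Fin.le_zero_iff]

private lemma key_lintegral (d : ℕ) :
    ∀ (n : ℕ) (g : EuclideanSpace ℝ (Fin d) → ℝ≥0∞), Measurable g →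
      (∫⁻ l : Fin n → EuclideanSpace ℝ (Fin d),
          ∏ k : Fin n, g (∑ j ∈ Finset.Iic k, l j)) = (∫⁻ u, g u) ^ n := by
  intro n
  induction n with
  | zero => intro g hg; rw [volume_pi]; simp
  | succ n ih =>
    intro g hg
    have hmeasS : ∀ (m : ℕ) (k : Fin m),
        Measurable (fun l : Fin m → EuclideanSpace ℝ (Fin d) => ∑ j ∈ Finset.Iic k, l j) :=
      fun m k => Finset.measurable_sum _ fun j _ => measurable_pi_apply j
    have hF : Measurable (fun l : Fin (n + 1) → EuclideanSpace ℝ (Fin d) =>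
        ∏ k : Fin (n + 1), g (∑ j ∈ Finset.Iic k, l j)) :=
      Finset.measurable_prod _ fun k _ => hg.comp (hmeasS _ k)
    have hmp := (measurePreserving_piFinSuccAbove
      (fun _ : Fin (n + 1) => (volume : Measure (EuclideanSpace ℝ (Fin d)))) 0).symm
    rw [volume_pi, ← hmp.lintegral_comp hF]
    rw [lintegral_prod _ (Measurable.aemeasurable (by fun_prop))]
    simp_rw [MeasurableEquiv.piFinSuccAbove_symm_apply, Fin.insertNthEquiv, Equiv.coe_fn_mk,
      Fin.insertNth_zero]
    simp only [Fin.zero_succAbove, cast_eq]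
    simp_rw [Fin.prod_univ_succ, Iic_zero_fin, Finset.sum_singleton, Fin.cons_zero, sum_Iic_cons]
    have hinner : ∀ x : EuclideanSpace ℝ (Fin d),
        (∫⁻ y : Fin n → EuclideanSpace ℝ (Fin d),
            g x * ∏ k : Fin n, g (x + ∑ j ∈ Finset.Iic k, y j)
          ∂(Measure.pi fun _ => volume)) = g x * (∫⁻ u, g u) ^ n := by
      intro x
      rw [lintegral_const_mul (g x) (show Measurable fun y : Fin n → EuclideanSpace ℝ (Fin d) =>
        ∏ k : Fin n, g (x + ∑ j ∈ Finset.Iic k, y j) by fun_prop)]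
      congr 1
      have := ih (fun u => g (x + u)) (hg.comp (measurable_const_add x))
      rw [volume_pi] at this
      rw [this, lintegral_add_left_eq_self g x]
    simp_rw [hinner]
    rw [lintegral_mul_const _ hg, pow_succ, mul_comm]

private lemma perm_lintegral (d n : ℕ) (F : (Fin n → EuclideanSpace ℝ (Fin d)) → ℝ≥0∞)
    (hF : Measurable F) (σ : Equiv.Perm (Fin n)) :
    (∫⁻ l : Fin n → EuclideanSpace ℝ (Fin d), F (fun i => l (σ i))) = ∫⁻ l, F l := by
  have hmp := volume_measurePreserving_piCongrLeft
    (fun _ : Fin n => EuclideanSpace ℝ (Fin d)) σ.symm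
  rw [← hmp.lintegral_comp hF]
  congr 1
  ext l
  congr 1
  ext i
  simp only [Function.comp_apply, MeasurableEquiv.coe_piCongrLeft]
  conv_rhs => rw [show i = σ.symm (σ i) by simp]
  rw [Equiv.piCongrLeft_apply_apply]

theorem stmt4 (d p n : ℕ) (hd : 0 < d) (hp : 1 ≤ p) (hn : 1 ≤ n)
    (Q : EuclideanSpace ℝ (Fin d) → ℝ) (hQm : Measurable Q) (hQ0 : ∀ l, 0 ≤ Q l) :
    (∫ l : Fin n → EuclideanSpace ℝ (Fin d),
        (∑ σ : Equiv.Perm (Fin n), ∏ k : Fin n, Q (∑ j ∈ Finset.Iic k, l (σ j))) ^ p)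
      ≤ (n.factorial : ℝ) ^ p * (∫ u, Q u ^ p) ^ n := by
  classical
  obtain ⟨m, rfl⟩ : ∃ m, p = m + 1 := ⟨p - 1, (Nat.succ_pred_eq_of_pos hp).symm⟩
  set g : EuclideanSpace ℝ (Fin d) → ℝ≥0∞ := fun u => ENNReal.ofReal (Q u ^ (m + 1)) with hgdef
  have hgm : Measurable g := (hQm.pow_const _).ennreal_ofReal
  set B : ℝ≥0∞ := ∫⁻ u, g u with hBdef
  set P : Equiv.Perm (Fin n) → (Fin n → EuclideanSpace ℝ (Fin d)) → ℝ :=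
    fun σ l => ∏ k, Q (∑ j ∈ Finset.Iic k, l (σ j)) with hPdef
  have hPm : ∀ σ, Measurable (P σ) := fun σ =>
    Finset.measurable_prod _ fun k _ =>
      hQm.comp (Finset.measurable_sum _ fun j _ => measurable_pi_apply _)
  have hP0 : ∀ σ l, 0 ≤ P σ l := fun σ l => Finset.prod_nonneg fun k _ => hQ0 _
  set G : (Fin n → EuclideanSpace ℝ (Fin d)) → ℝ := fun l => (∑ σ, P σ l) ^ (m + 1) with hGdef
  have hGm : Measurable G := (Finset.measurable_sum _ fun σ _ => hPm σ).pow_const _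
  have hG0 : ∀ l, 0 ≤ G l := fun l =>
    pow_nonneg (Finset.sum_nonneg fun σ _ => hP0 σ l) _
  set A : ℝ≥0∞ := ∫⁻ l, ENNReal.ofReal (G l) with hAdef
  have hmeas2 : ∀ σ : Equiv.Perm (Fin n),
      Measurable (fun l : Fin n → EuclideanSpace ℝ (Fin d) =>
        ∏ k, g (∑ j ∈ Finset.Iic k, l (σ j))) := fun σ =>
    Finset.measurable_prod _ fun k _ =>
      hgm.comp (Finset.measurable_sum _ fun j _ => measurable_pi_apply _)
  have hofP : ∀ σ (l : Fin n → EuclideanSpace ℝ (Fin d)),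
      ENNReal.ofReal (P σ l ^ (m + 1)) = ∏ k, g (∑ j ∈ Finset.Iic k, l (σ j)) := by
    intro σ l
    rw [hPdef]
    simp only
    rw [← Finset.prod_pow, ENNReal.ofReal_prod_of_nonneg (fun k _ => pow_nonneg (hQ0 _) _)]
  have hterm : ∀ σ : Equiv.Perm (Fin n),
      (∫⁻ l : Fin n → EuclideanSpace ℝ (Fin d), ∏ k, g (∑ j ∈ Finset.Iic k, l (σ j))) = B ^ n := by
    intro σ
    have hFm : Measurable (fun l : Fin n → EuclideanSpace ℝ (Fin d) =>
        ∏ k, g (∑ j ∈ Finset.Iic k, l j)) :=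
      Finset.measurable_prod _ fun k _ =>
        hgm.comp (Finset.measurable_sum _ fun j _ => measurable_pi_apply _)
    calc (∫⁻ l : Fin n → EuclideanSpace ℝ (Fin d), ∏ k, g (∑ j ∈ Finset.Iic k, l (σ j)))
        = ∫⁻ l : Fin n → EuclideanSpace ℝ (Fin d),
            (fun l' : Fin n → EuclideanSpace ℝ (Fin d) =>
              ∏ k, g (∑ j ∈ Finset.Iic k, l' j)) (fun i => l (σ i)) := rfl
      _ = ∫⁻ l : Fin n → EuclideanSpace ℝ (Fin d), ∏ k, g (∑ j ∈ Finset.Iic k, l j) :=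
          perm_lintegral d n _ hFm σ
      _ = B ^ n := key_lintegral d n g hgm
  have hcardperm : (Finset.univ : Finset (Equiv.Perm (Fin n))).card = n.factorial := by
    simp [Finset.card_univ, Fintype.card_perm]
  have hpoint : ∀ l, G l ≤ (n.factorial : ℝ) ^ m * ∑ σ, P σ l ^ (m + 1) := by
    intro l
    have h := pow_sum_div_card_le_sum_pow (s := Finset.univ) (f := fun σ => P σ l)
      (fun σ _ => hP0 σ l) m
    rw [hcardperm] at h
    have hpos : (0 : ℝ) < (n.factorial : ℝ) ^ m := by positivity
    have h2 := (div_le_iff₀ hpos).mp h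
    exact h2.trans_eq (mul_comm _ _)
  have hA_le : A ≤ (n.factorial : ℝ≥0∞) ^ (m + 1) * B ^ n := by
    have step1 : A ≤ ∫⁻ l : Fin n → EuclideanSpace ℝ (Fin d),
        ((n.factorial : ℝ≥0∞) ^ m * ∑ σ : Equiv.Perm (Fin n), ∏ k, g (∑ j ∈ Finset.Iic k, l (σ j))) := by
      apply lintegral_mono
      intro l
      calc ENNReal.ofReal (G l)
          ≤ ENNReal.ofReal ((n.factorial : ℝ) ^ m * ∑ σ, P σ l ^ (m + 1)) :=
            ENNReal.ofReal_le_ofReal (hpoint l)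
        _ = (n.factorial : ℝ≥0∞) ^ m * ∑ σ : Equiv.Perm (Fin n), ∏ k, g (∑ j ∈ Finset.Iic k, l (σ j)) := by
            rw [ENNReal.ofReal_mul (by positivity)]
            congr 1
            · rw [ENNReal.ofReal_pow (by positivity), ENNReal.ofReal_natCast]
            · rw [ENNReal.ofReal_sum_of_nonneg (fun σ _ => pow_nonneg (hP0 σ l) _)]
              exact Finset.sum_congr rfl fun σ _ => hofP σ l
    have step2 : (∫⁻ l : Fin n → EuclideanSpace ℝ (Fin d),
        ((n.factorial : ℝ≥0∞) ^ m * ∑ σ : Equiv.Perm (Fin n), ∏ k, g (∑ j ∈ Finset.Iic k, l (σ j))))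
        = (n.factorial : ℝ≥0∞) ^ (m + 1) * B ^ n := by
      rw [lintegral_const_mul _ (Finset.measurable_sum _ fun σ _ => hmeas2 σ)]
      rw [lintegral_finset_sum _ fun σ _ => hmeas2 σ]
      simp_rw [hterm]
      rw [Finset.sum_const, hcardperm, nsmul_eq_mul, ← mul_assoc, ← pow_succ]
    exact step1.trans_eq step2
  have hBn_le : B ^ n ≤ A := by
    rw [← key_lintegral d n g hgm]
    apply lintegral_mono
    intro l
    have h1 : (∏ k, g (∑ j ∈ Finset.Iic k, l j)) = ENNReal.ofReal (P 1 l ^ (m + 1)) := by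
      rw [hofP 1 l]
      simp
    show (∏ k, g (∑ j ∈ Finset.Iic k, l j)) ≤ ENNReal.ofReal (G l)
    rw [h1]
    apply ENNReal.ofReal_le_ofReal
    apply pow_le_pow_left₀ (hP0 1 l)
    exact Finset.single_le_sum (fun σ _ => hP0 σ l) (Finset.mem_univ 1)
  rw [show (∫ l : Fin n → EuclideanSpace ℝ (Fin d),
      (∑ σ : Equiv.Perm (Fin n), ∏ k : Fin n, Q (∑ j ∈ Finset.Iic k, l (σ j))) ^ (m + 1))
      = ∫ l, G l from rfl]
  rw [integral_eq_lintegral_of_nonneg_ae (Filter.Eventually.of_forall hG0)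
    hGm.aestronglyMeasurable]
  rw [integral_eq_lintegral_of_nonneg_ae
    (Filter.Eventually.of_forall fun u => pow_nonneg (hQ0 u) (m + 1))
    (hQm.pow_const _).aestronglyMeasurable]
  rw [← hAdef, ← hBdef]
  by_cases hB : B = ⊤
  · have hA : A = ⊤ := by
      rw [hB] at hBn_le
      rw [ENNReal.top_pow (by omega)] at hBn_le
      exact top_le_iff.mp hBn_le
    rw [hA, hB]
    simp [zero_pow (by omega : n ≠ 0)]
  · have hR : (n.factorial : ℝ≥0∞) ^ (m + 1) * B ^ n ≠ ⊤ :=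
      ENNReal.mul_ne_top (ENNReal.pow_ne_top (ENNReal.natCast_ne_top _))
        (ENNReal.pow_ne_top hB)
    have h := ENNReal.toReal_mono hR hA_le
    rwa [ENNReal.toReal_mul, ENNReal.toReal_pow, ENNReal.toReal_pow,
      ENNReal.toReal_natCast] at h
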